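/- Let W > 0 and λ > 0. Suppose u : ℝ → ℝ is continuously differentiable on [−1,1] with u(−1) = u(1) = 0, and there exist b < a in the open interval (−1,1) such that u(x) = −1 for x ∈ [b,a], u(x) > −1 for x ∈ [−1,b) ∪ (a,1], and u is twice differentiable on (−1,b) ∪ (a,1) with u''(x) = λ/(2·(1+u(x)+W)²) there. Then λ > Λ_*(W), b = −a, a = 1 − √(Λ_*(W)/λ), and u(−x) = u(x) for all x ∈ [−1,1]. -/

import Mathlib

open Set Filter

noncomputable def G (W v : ℝ) : ℝ :=
  Real.sqrt ((1+v)*(1+v+W)) + W * Real.log (Real.sqrt (1+v) + Real.sqrt (1+v+W))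
    - W * Real.log (Real.sqrt W)

lemma G_neg_one (W : ℝ) : G W (-1) = 0 := by
  simp [G]

lemma G_contAt (W : ℝ) (hW : 0 < W) {v : ℝ} (hv : -1 ≤ v) : ContinuousAt (G W) v := by
  have h1 : (0:ℝ) < 1 + v + W := by linarith
  have harg : Real.sqrt (1+v) + Real.sqrt (1+v+W) ≠ 0 := by
    have := Real.sqrt_pos.2 h1
    positivity
  unfold G
  fun_prop (disch := assumption)

lemma hasDerivAt_G (W : ℝ) (hW : 0 < W) {v : ℝ} (hv : -1 < v) :
    HasDerivAt (G W) (Real.sqrt (1+v+W) / Real.sqrt (1+v)) v := by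
  have h0 : (0:ℝ) < 1 + v := by linarith
  have h1 : (0:ℝ) < 1 + v + W := by linarith
  set α := Real.sqrt (1+v) with hα
  set β := Real.sqrt (1+v+W) with hβ
  have hαpos : 0 < α := Real.sqrt_pos.2 h0
  have hβpos : 0 < β := Real.sqrt_pos.2 h1
  have hα2 : α^2 = 1+v := Real.sq_sqrt h0.le
  have hβ2 : β^2 = 1+v+W := Real.sq_sqrt h1.le
  -- derivative of inner polynomial
  have hp : HasDerivAt (fun v : ℝ => (1+v)*(1+v+W)) (2+2*v+W) v := by
    have : HasDerivAt (fun v : ℝ => (1+v)*(1+v+W)) (1*(1+v+W) + (1+v)*1) v := by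
      exact ((hasDerivAt_id v).const_add 1).mul (((hasDerivAt_id v).const_add 1).add_const W)
    convert this using 1; ring
  have hprod : HasDerivAt (fun v : ℝ => Real.sqrt ((1+v)*(1+v+W)))
      ((2+2*v+W) / (2*(α*β))) v := by
    have hsq := (Real.hasDerivAt_sqrt (x := (1+v)*(1+v+W)) (by positivity)).comp v hp
    refine hsq.congr_deriv ?_
    rw [Real.sqrt_mul h0.le, ← hα, ← hβ, div_mul_eq_mul_div, one_mul]
  have hsv : HasDerivAt (fun v : ℝ => Real.sqrt (1+v)) (1/(2*α)) v := by
    have := (Real.hasDerivAt_sqrt (x := 1+v) h0.ne').comp v ((hasDerivAt_id v).const_add 1)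
    exact this.congr_deriv (mul_one _)
  have hsw : HasDerivAt (fun v : ℝ => Real.sqrt (1+v+W)) (1/(2*β)) v := by
    have := (Real.hasDerivAt_sqrt (x := 1+v+W) h1.ne').comp v
      (((hasDerivAt_id v).const_add 1).add_const W)
    exact this.congr_deriv (mul_one _)
  have hlog : HasDerivAt (fun v : ℝ => Real.log (Real.sqrt (1+v) + Real.sqrt (1+v+W)))
      ((1/(2*α) + 1/(2*β)) / (α + β)) v := by
    exact (hsv.add hsw).log (add_pos hαpos hβpos).ne'
  have hsum := hprod.add ((hlog.const_mul W).sub_const (W * Real.log (Real.sqrt W)))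
  have hfun : (G W) = fun v => Real.sqrt ((1+v)*(1+v+W)) +
      (W * Real.log (Real.sqrt (1+v) + Real.sqrt (1+v+W)) - W * Real.log (Real.sqrt W)) := by
    funext x; unfold G; ring
  rw [hfun]
  have hval : (2+2*v+W) / (2*(α*β)) + W * ((1/(2*α) + 1/(2*β)) / (α + β)) = β / α := by
    have hW' : W = β^2 - α^2 := by rw [hα2, hβ2]; ring
    have h2v : 2+2*v+W = α^2 + β^2 := by rw [hα2, hβ2]; ring
    rw [h2v, hW']
    field_simp
    ring
  rw [← hval]
  exact hsum

lemma const_of_deriv_zero_Ioo {f : ℝ → ℝ} {a b : ℝ} (hab : a < b)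
    (hc : ContinuousOn f (Icc a b)) (hd : ∀ x ∈ Ioo a b, HasDerivAt f 0 x) :
    ∀ x ∈ Icc a b, f x = f a := by
  intro x hx
  rcases eq_or_lt_of_le hx.1 with h | hax
  · rw [← h]
  -- f is constant = f x on (a, x]
  have key : ∀ t ∈ Ioc a x, f t = f x := by
    intro t ht
    have := constant_of_has_deriv_right_zero (f := f) (a := t) (b := x)
      (hc.mono (Icc_subset_Icc ht.1.le hx.2))
      (fun y hy => (hd y ⟨lt_of_lt_of_le ht.1 hy.1, lt_of_lt_of_le hy.2 hx.2⟩).hasDerivWithinAt)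
    exact (this x (right_mem_Icc.2 ht.2)).symm
  -- limit as t → a⁺
  have hne : (nhdsWithin a (Ioo a x)).NeBot := by
    rw [← mem_closure_iff_nhdsWithin_neBot, closure_Ioo hax.ne]
    exact ⟨le_refl a, hax.le⟩
  have h1 : Filter.Tendsto f (nhdsWithin a (Ioo a x)) (nhds (f a)) :=
    ((hc.continuousWithinAt ⟨le_refl a, by linarith [hx.2]⟩).mono
      (fun z hz => ⟨hz.1.le, le_trans hz.2.le hx.2⟩)).tendsto
  have h2 : Filter.Tendsto f (nhdsWithin a (Ioo a x)) (nhds (f x)) := by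
    apply Filter.Tendsto.congr' _ tendsto_const_nhds
    filter_upwards [self_mem_nhdsWithin] with t ht
    exact (key t ⟨ht.1, ht.2.le⟩).symm
  exact tendsto_nhds_unique h2 h1
/-- `φ(r) = √(r(1−r)) + (1−r)^{3/2}·log(1+√r) − (1/2)(1−r)^{3/2}·log(1−r)`. -/
noncomputable def phi (r : ℝ) : ℝ :=
  Real.sqrt (r * (1 - r)) + (1 - r) ^ ((3 : ℝ) / 2) * Real.log (1 + Real.sqrt r)
    - (1 / 2) * (1 - r) ^ ((3 : ℝ) / 2) * Real.log (1 - r)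

/-- `Λ_*(W) = (1+W)³·φ(1/(1+W))²`. -/
noncomputable def LambdaStar (W : ℝ) : ℝ := (1 + W) ^ 3 * (phi (1 / (1 + W))) ^ 2

noncomputable def cW (W : ℝ) : ℝ := Real.sqrt W * G W 0

lemma cW_pos {W : ℝ} (hW : 0 < W) : 0 < cW W := by
  have h1 : (0:ℝ) < 1 + W := by linarith
  have hsW : 0 < Real.sqrt W := Real.sqrt_pos.2 hW
  have hs1 : 0 < Real.sqrt (1 + W) := Real.sqrt_pos.2 h1
  have hlog : Real.log (Real.sqrt W) < Real.log (1 + Real.sqrt (1 + W)) := by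
    apply Real.log_lt_log hsW
    have : Real.sqrt W < Real.sqrt (1+W) := Real.sqrt_lt_sqrt hW.le (by linarith)
    linarith
  have : 0 < G W 0 := by
    unfold G
    norm_num
    have h2 : 0 < Real.sqrt (1+W) := hs1
    nlinarith [h2, hlog]
  exact mul_pos hsW this

lemma LambdaStar_eq_sq {W : ℝ} (hW : 0 < W) : LambdaStar W = (cW W) ^ 2 := by
  have h1 : (0:ℝ) < 1 + W := by linarith
  set sW := Real.sqrt W with hsWdef
  set s1 := Real.sqrt (1 + W) with hs1def
  have hsW : 0 < sW := Real.sqrt_pos.2 hW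
  have hs1 : 0 < s1 := Real.sqrt_pos.2 h1
  have hsW2 : sW^2 = W := Real.sq_sqrt hW.le
  have hs12 : s1^2 = 1 + W := Real.sq_sqrt h1.le
  have key : cW W = (1+W) * s1 * phi (1/(1+W)) := by
    have hr1 : 1 - 1/(1+W) = W/(1+W) := by field_simp; ring
    have e1 : Real.sqrt ((1/(1+W)) * (1 - 1/(1+W))) = sW / (1+W) := by
      rw [hr1]
      have : (1/(1+W)) * (W/(1+W)) = W / (1+W)^2 := by
        rw [div_mul_div_comm, one_mul, sq]
      rw [this, Real.sqrt_div hW.le, Real.sqrt_sq h1.le]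
    have e2 : ((1:ℝ) - 1/(1+W)) ^ ((3:ℝ)/2) = (W/(1+W)) * (sW/s1) := by
      rw [hr1]
      have hpos : (0:ℝ) < W/(1+W) := by positivity
      have : ((3:ℝ)/2) = (1:ℝ) + (1/2 : ℝ) := by norm_num
      rw [this, Real.rpow_add hpos, Real.rpow_one, ← Real.sqrt_eq_rpow,
        Real.sqrt_div hW.le]
    have e3 : Real.sqrt (1/(1+W)) = 1/s1 := by
      rw [Real.sqrt_div (by norm_num : (0:ℝ) ≤ 1), Real.sqrt_one]
    have e4 : Real.log (1 + 1/s1) = Real.log (1 + s1) - Real.log s1 := by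
      rw [show (1:ℝ) + 1/s1 = (1+s1)/s1 by field_simp; ring, Real.log_div (by positivity) hs1.ne']
    have e5 : Real.log (W/(1+W)) = 2 * Real.log sW - 2 * Real.log s1 := by
      rw [Real.log_div hW.ne' h1.ne', Real.log_sqrt hW.le, Real.log_sqrt h1.le]; ring
    have e6 : Real.sqrt ((1+(0:ℝ))*(1+0+W)) = s1 := by norm_num; rfl
    unfold cW G phi
    rw [e1, e2, e3, e4, hr1, e5, e6]
    norm_num
    field_simp
    ring
  rw [LambdaStar, key]
  have : ((1+W) * s1)^2 = (1+W)^3 := by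
    rw [mul_pow, hs12]; ring
  nlinarith [this]

lemma right_side (W lam a : ℝ) (hW : 0 < W) (hlam : 0 < lam) (ha1 : a < 1)
    (v v' : ℝ → ℝ)
    (hv : ∀ x ∈ Icc a 1, HasDerivWithinAt v (v' x) (Icc a 1) x)
    (hv'c : ContinuousOn v' (Icc a 1))
    (hva : v a = -1) (hv'a : v' a = 0) (hv1 : v 1 = 0)
    (hgt : ∀ x ∈ Ioc a 1, -1 < v x)
    (hv'' : ∀ x ∈ Ioo a 1, HasDerivAt v' (lam / (2*(1+v x+W)^2)) x) :
    (∀ x ∈ Icc a 1, Real.sqrt W * G W (v x) = Real.sqrt lam * (x - a)) ∧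
    (∀ x ∈ Icc a 1, v x ∈ Icc (-1:ℝ) 0) := by
  have hIcc : ∀ x ∈ Ioo a 1, HasDerivAt v (v' x) x := fun x hx =>
    (hv x (Ioo_subset_Icc_self hx)).hasDerivAt (Icc_mem_nhds hx.1 hx.2)
  have hvpos : ∀ x ∈ Icc a 1, 0 < 1 + v x + W := by
    intro x hx
    rcases eq_or_lt_of_le hx.1 with h | h
    · rw [← h, hva]; linarith
    · have := hgt x ⟨h, hx.2⟩; linarith
  have hvc : ContinuousOn v (Icc a 1) := fun x hx => (hv x hx).continuousWithinAt
  set E : ℝ → ℝ := fun x => (v' x)^2 + lam/(1+v x+W) with hEdef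
  have hEc : ContinuousOn E (Icc a 1) := by
    apply (hv'c.pow 2).add
    exact continuousOn_const.div ((continuousOn_const.add hvc).add continuousOn_const)
      (fun x hx => (hvpos x hx).ne')
  have hEd : ∀ x ∈ Ioo a 1, HasDerivAt E 0 x := by
    intro x hx
    have hd := hv'' x hx
    have hvd := hIcc x hx
    have hpos := hvpos x (Ioo_subset_Icc_self hx)
    have h1 : HasDerivAt (fun y => (v' y)^2)
        ((2:ℕ) * v' x ^ (2-1) * (lam/(2*(1+v x+W)^2))) x := hd.pow 2
    have h2 : HasDerivAt (fun y => 1 + v y + W) (v' x) x := by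
      simpa using (hvd.const_add 1).add_const W
    have h3 : HasDerivAt (fun y => lam / (1 + v y + W))
        ((0 * (1 + v x + W) - lam * v' x)/(1+v x+W)^2) x :=
      (hasDerivAt_const x lam).div h2 hpos.ne'
    have hsum := h1.add h3
    refine hsum.congr_deriv ?_
    field_simp
    ring
  have hE : ∀ x ∈ Icc a 1, E x = lam / W := by
    have hcst := const_of_deriv_zero_Ioo ha1 hEc hEd
    intro x hx
    rw [hcst x hx]
    simp only [hEdef, hva, hv'a]
    norm_num
  have hsq : ∀ x ∈ Icc a 1, (v' x)^2 = lam * (1 + v x) / (W * (1 + v x + W)) := by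
    intro x hx
    have h := hE x hx
    simp only [hEdef] at h
    have hp := hvpos x hx
    field_simp at h ⊢
    nlinarith [h]
  have hne : ∀ x ∈ Ioc a 1, v' x ≠ 0 := by
    intro x hx h0
    have hs := hsq x ⟨hx.1.le, hx.2⟩
    rw [h0] at hs
    have hgtx := hgt x hx
    have hp := hvpos x ⟨hx.1.le, hx.2⟩
    have : 0 < lam * (1 + v x) / (W * (1 + v x + W)) :=
      div_pos (mul_pos hlam (by linarith)) (mul_pos hW hp)
    rw [← hs] at this
    simp at this
  have hv'pos : ∀ x ∈ Ioc a 1, 0 < v' x := by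
    intro x hx
    rcases (hne x hx).lt_or_gt with hneg | hpos
    · exfalso
      have hallneg : ∀ y ∈ Ioc a x, v' y < 0 := by
        intro y hy
        rcases (hne y ⟨hy.1, hy.2.trans hx.2⟩).lt_or_gt with h | h
        · exact h
        · exfalso
          have hivt := intermediate_value_Icc' hy.2
            (hv'c.mono (Icc_subset_Icc hy.1.le hx.2))
          obtain ⟨z, hz, hz0⟩ := hivt (⟨hneg.le, h.le⟩ : (0:ℝ) ∈ Icc (v' x) (v' y))
          exact hne z ⟨lt_of_lt_of_le hy.1 hz.1, hz.2.trans hx.2⟩ hz0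
      have hanti : StrictAntiOn v (Icc a x) := by
        apply strictAntiOn_of_deriv_neg (convex_Icc a x)
          (hvc.mono (Icc_subset_Icc le_rfl hx.2))
        intro y hy
        rw [interior_Icc] at hy
        have hyd : HasDerivAt v (v' y) y := hIcc y ⟨hy.1, hy.2.trans_le hx.2⟩
        rw [hyd.deriv]
        exact hallneg y ⟨hy.1, hy.2.le⟩
      have h1 := hanti ⟨le_rfl, hx.1.le⟩ ⟨hx.1.le, le_rfl⟩ hx.1
      have h2 := hgt x hx
      rw [hva] at h1
      linarith
    · exact hpos
  have hmono : StrictMonoOn v (Icc a 1) := by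
    apply strictMonoOn_of_deriv_pos (convex_Icc a 1) hvc
    intro y hy
    rw [interior_Icc] at hy
    rw [(hIcc y hy).deriv]
    exact hv'pos y ⟨hy.1, hy.2.le⟩
  have hrange : ∀ x ∈ Icc a 1, v x ∈ Icc (-1:ℝ) 0 := by
    intro x hx
    constructor
    · rcases eq_or_lt_of_le hx.1 with h | h
      · rw [← h, hva]
      · exact (hgt x ⟨h, hx.2⟩).le
    · rcases eq_or_lt_of_le hx.2 with h | h
      · rw [h, hv1]
      · have := hmono hx (right_mem_Icc.2 ha1.le) h
        rw [hv1] at this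
        exact this.le
  have hv'eq : ∀ x ∈ Ioo a 1, v' x =
      Real.sqrt lam * Real.sqrt (1 + v x) / (Real.sqrt W * Real.sqrt (1 + v x + W)) := by
    intro x hx
    have h1 : 0 < 1 + v x := by have := hgt x ⟨hx.1, hx.2.le⟩; linarith
    have hp := hvpos x (Ioo_subset_Icc_self hx)
    have hpos := hv'pos x ⟨hx.1, hx.2.le⟩
    have hv2 : v' x = Real.sqrt ((v' x)^2) := (Real.sqrt_sq hpos.le).symm
    rw [hv2, hsq x (Ioo_subset_Icc_self hx),
      Real.sqrt_div (mul_nonneg hlam.le h1.le), Real.sqrt_mul hlam.le,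
      Real.sqrt_mul hW.le]
  set H : ℝ → ℝ := fun x => Real.sqrt W * G W (v x) - Real.sqrt lam * (x - a) with hHdef
  have hHc : ContinuousOn H (Icc a 1) := by
    apply ContinuousOn.sub
    · exact continuousOn_const.mul (fun x hx =>
        (G_contAt W hW (hrange x hx).1).comp_continuousWithinAt (hvc x hx))
    · exact continuousOn_const.mul ((continuousOn_id.sub continuousOn_const))
  have hHd : ∀ x ∈ Ioo a 1, HasDerivAt H 0 x := by
    intro x hx
    have h1 : 0 < 1 + v x := by have := hgt x ⟨hx.1, hx.2.le⟩; linarith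
    have hp := hvpos x (Ioo_subset_Icc_self hx)
    have hG := (hasDerivAt_G W hW (show -1 < v x by linarith)).comp x (hIcc x hx)
    have hder : HasDerivAt H
        (Real.sqrt W * (Real.sqrt (1+v x+W)/Real.sqrt (1+v x) * v' x) - Real.sqrt lam * 1) x :=
      (hG.const_mul _).sub (((hasDerivAt_id x).sub_const a).const_mul _)
    convert hder using 1
    rw [hv'eq x hx]
    have sα := Real.sqrt_pos.2 h1
    have sβ := Real.sqrt_pos.2 hp
    have sw := Real.sqrt_pos.2 hW
    have sl := Real.sqrt_pos.2 hlam
    field_simp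
    ring
  have hH0 : ∀ x ∈ Icc a 1, H x = 0 := by
    have hcst := const_of_deriv_zero_Ioo ha1 hHc hHd
    intro x hx
    rw [hcst x hx]
    simp [hHdef, hva, G_neg_one]
  refine ⟨fun x hx => ?_, hrange⟩
  have := hH0 x hx
  simp only [hHdef] at this
  linarith

lemma G_strictMono {W : ℝ} (hW : 0 < W) : StrictMonoOn (G W) (Icc (-1 : ℝ) 0) := by
  apply strictMonoOn_of_deriv_pos (convex_Icc _ _)
  · exact fun v hv => (G_contAt W hW hv.1).continuousWithinAt
  · intro v hv
    rw [interior_Icc] at hv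
    rw [(hasDerivAt_G W hW hv.1).deriv]
    exact div_pos (Real.sqrt_pos.2 (by linarith [hv.1])) (Real.sqrt_pos.2 (by linarith [hv.1]))

theorem stmt_13 (W lam a b : ℝ) (hW : 0 < W) (hlam : 0 < lam)
    (hb : b ∈ Set.Ioo (-1 : ℝ) 1) (ha : a ∈ Set.Ioo (-1 : ℝ) 1) (hba : b < a)
    (u u' : ℝ → ℝ)
    (hu : ∀ x ∈ Set.Icc (-1 : ℝ) 1, HasDerivWithinAt u (u' x) (Set.Icc (-1 : ℝ) 1) x)
    (hu'c : ContinuousOn u' (Set.Icc (-1 : ℝ) 1))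
    (hum1 : u (-1) = 0) (hu1 : u 1 = 0)
    (hcoin : ∀ x ∈ Set.Icc b a, u x = -1)
    (hgt : ∀ x ∈ Set.Ico (-1 : ℝ) b ∪ Set.Ioc a 1, u x > -1)
    (hu'' : ∀ x ∈ Set.Ioo (-1 : ℝ) b ∪ Set.Ioo a 1,
      HasDerivAt u' (lam / (2 * (1 + u x + W) ^ 2)) x) :
    lam > LambdaStar W ∧ b = -a ∧ a = 1 - Real.sqrt (LambdaStar W / lam) ∧
      ∀ x ∈ Set.Icc (-1 : ℝ) 1, u (-x) = u x := by
  obtain ⟨hb1, hb2⟩ := hb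
  obtain ⟨ha1, ha2⟩ := ha
  have hsW : (0:ℝ) < Real.sqrt W := Real.sqrt_pos.2 hW
  have hsl : (0:ℝ) < Real.sqrt lam := Real.sqrt_pos.2 hlam
  -- u' vanishes on the coincidence set
  have hu'mid : ∀ x ∈ Ioo b a, u' x = 0 := by
    intro x hx
    have hx' : x ∈ Ioo (-1:ℝ) 1 := ⟨hb1.trans hx.1, hx.2.trans ha2⟩
    have hd : HasDerivAt u (u' x) x :=
      (hu x (Ioo_subset_Icc_self hx')).hasDerivAt (Icc_mem_nhds hx'.1 hx'.2)
    have hconst : HasDerivAt u 0 x := by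
      have hev : u =ᶠ[nhds x] (fun _ => (-1:ℝ)) := by
        filter_upwards [Ioo_mem_nhds hx.1 hx.2] with y hy
        exact hcoin y ⟨hy.1.le, hy.2.le⟩
      exact (hasDerivAt_const x (-1:ℝ)).congr_of_eventuallyEq hev
    exact hd.unique hconst
  have hu'a : u' a = 0 := by
    have hnb : (nhdsWithin a (Ioo b a)).NeBot := by
      rw [← mem_closure_iff_nhdsWithin_neBot, closure_Ioo hba.ne]
      exact right_mem_Icc.2 hba.le
    have t1 : Tendsto u' (nhdsWithin a (Ioo b a)) (nhds (u' a)) :=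
      (hu'c.continuousWithinAt ⟨ha1.le, ha2.le⟩).mono
        (fun z hz => ⟨(hb1.trans hz.1).le, (hz.2.trans ha2).le⟩)
    have t2 : Tendsto u' (nhdsWithin a (Ioo b a)) (nhds 0) := by
      apply Tendsto.congr' _ tendsto_const_nhds
      filter_upwards [self_mem_nhdsWithin] with y hy
      exact (hu'mid y hy).symm
    exact tendsto_nhds_unique t1 t2
  have hu'b : u' b = 0 := by
    have hnb : (nhdsWithin b (Ioo b a)).NeBot := by
      rw [← mem_closure_iff_nhdsWithin_neBot, closure_Ioo hba.ne]
      exact left_mem_Icc.2 hba.le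
    have t1 : Tendsto u' (nhdsWithin b (Ioo b a)) (nhds (u' b)) :=
      (hu'c.continuousWithinAt ⟨hb1.le, hb2.le⟩).mono
        (fun z hz => ⟨(hb1.trans hz.1).le, (hz.2.trans ha2).le⟩)
    have t2 : Tendsto u' (nhdsWithin b (Ioo b a)) (nhds 0) := by
      apply Tendsto.congr' _ tendsto_const_nhds
      filter_upwards [self_mem_nhdsWithin] with y hy
      exact (hu'mid y hy).symm
    exact tendsto_nhds_unique t1 t2
  -- right interval
  have hsubR : Icc a 1 ⊆ Icc (-1:ℝ) 1 := Icc_subset_Icc ha1.le le_rfl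
  obtain ⟨HR, rangeR⟩ := right_side W lam a hW hlam ha2 u u'
    (fun x hx => (hu x (hsubR hx)).mono hsubR)
    (hu'c.mono hsubR)
    (hcoin a ⟨hba.le, le_rfl⟩) hu'a hu1
    (fun x hx => hgt x (Or.inr hx))
    (fun x hx => hu'' x (Or.inr hx))
  -- left interval, reflected
  have hnb1 : -b < 1 := by linarith
  have hmaps : MapsTo (fun y : ℝ => -y) (Icc (-b) 1) (Icc (-1:ℝ) 1) := by
    intro y hy
    show -y ∈ Icc (-1:ℝ) 1
    simp only [mem_Icc] at hy ⊢
    constructor <;> linarith [hb1]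
  obtain ⟨HL, rangeL⟩ := right_side W lam (-b) hW hlam hnb1
    (fun x => u (-x)) (fun x => -u' (-x))
    (fun x hx => by
      have hd := (hu (-x) (hmaps hx)).comp x
        ((hasDerivAt_neg x).hasDerivWithinAt (s := Icc (-b) 1)) hmaps
      exact hd.congr_deriv (by simp))
    ((hu'c.comp continuousOn_neg hmaps).neg)
    (by simp only [neg_neg]; exact hcoin b ⟨le_rfl, hba.le⟩)
    (by simp only [neg_neg, hu'b, neg_zero])
    (by norm_num [hum1])
    (fun x hx => by
      have : -x ∈ Ico (-1:ℝ) b := ⟨by linarith [hx.2], by linarith [hx.1]⟩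
      exact hgt (-x) (Or.inl this))
    (fun x hx => by
      have hmem : -x ∈ Ioo (-1:ℝ) b := ⟨by linarith [hx.2], by linarith [hx.1]⟩
      have hd := (hu'' (-x) (Or.inl hmem)).comp x (hasDerivAt_neg x)
      have := hd.neg
      exact this.congr_deriv (by simp))
  -- evaluate at x = 1
  have hR1 := HR 1 (right_mem_Icc.2 ha2.le)
  have hL1 := HL 1 (right_mem_Icc.2 hnb1.le)
  rw [hu1] at hR1
  rw [show -(1:ℝ) = (-1:ℝ) by norm_num, hum1] at hL1
  have hcR : cW W = Real.sqrt lam * (1 - a) := by rw [cW]; linarith [hR1]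
  have hcL : cW W = Real.sqrt lam * (1 + b) := by rw [cW]; linarith [hL1]
  have hbeq : b = -a := by
    have : Real.sqrt lam * (1 - a) = Real.sqrt lam * (1 + b) := by rw [← hcR, ← hcL]
    have := mul_left_cancel₀ hsl.ne' this
    linarith
  have hapos : 0 < a := by rw [hbeq] at hba; linarith
  have hcpos := cW_pos hW
  have hlt : cW W < Real.sqrt lam := by
    rw [hcR]
    nlinarith
  have hlam_gt : lam > LambdaStar W := by
    rw [LambdaStar_eq_sq hW]
    nlinarith [Real.sq_sqrt hlam.le]
  have haeq : a = 1 - Real.sqrt (LambdaStar W / lam) := by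
    rw [LambdaStar_eq_sq hW, Real.sqrt_div (sq_nonneg _), Real.sqrt_sq hcpos.le, hcR]
    rw [mul_comm, mul_div_assoc, div_self hsl.ne', mul_one]
    ring
  -- evenness
  have hGmono := G_strictMono hW
  have hkey : ∀ x ∈ Icc (0:ℝ) 1, u (-x) = u x := by
    intro x hx
    by_cases hxa : x ≤ a
    · have hx1 : x ∈ Icc b a := ⟨by rw [hbeq]; linarith [hx.1], hxa⟩
      have hx2 : -x ∈ Icc b a := ⟨by rw [hbeq]; linarith [hxa], by linarith [hx.1]⟩
      rw [hcoin _ hx2, hcoin _ hx1]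
    · push_neg at hxa
      have hmemR : x ∈ Icc a 1 := ⟨hxa.le, hx.2⟩
      have hmemL : x ∈ Icc (-b) 1 := ⟨by rw [hbeq]; simpa using hxa.le, hx.2⟩
      have e1 := HR x hmemR
      have e2 := HL x hmemL
      have heq : G W (u (-x)) = G W (u x) := by
        apply mul_left_cancel₀ hsW.ne'
        rw [e1, e2, hbeq]
        ring_nf
      exact hGmono.injOn (rangeL x hmemL) (rangeR x hmemR) heq
  refine ⟨hlam_gt, hbeq, haeq, fun x hx => ?_⟩
  rcases le_total 0 x with h | h
  · exact hkey x ⟨h, hx.2⟩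
  · have := hkey (-x) ⟨by linarith, by linarith [hx.1]⟩
    rw [neg_neg] at this
    exact this.symm
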